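/- For every set partition p of {1,...,n}, there is a unique S-path S of n+1 coordinates such that p corresponds to S, i.e., the map sending a partition to its associated S-path is well-defined: set S_0 = 0, and for j = 1,...,n, let S_j - S_{j-1} equal the size of the cell of p whose maximal element is j (or 0 if no cell has maximal element j); then S is an S-path (S_0 = 0, S_n = n, S_j ≤ j, and S is nondecreasing). -/

import Mathlib

/-- Given a set partition `p` of `{1,...,n}`, the associated S-path: `S j` is the total
size of the cells of `p` whose maximal element is at most `j`, so that
`S j - S (j-1)` is the size of the cell with maximal element `j` (or `0` if none). -/
def pathOfPartition (n : ℕ) (p : Finpartition (Finset.Icc 1 n)) (j : ℕ) : ℕ :=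
  ∑ C ∈ p.parts.filter (fun C => ∀ x ∈ C, x ≤ j), C.card

/-- The map sending a set partition of `{1,...,n}` to its associated S-path is
well-defined: the result is an S-path, i.e. `S 0 = 0`, `S n = n`, `S j ≤ j` for all
`j ≤ n`, and `S` is nondecreasing. -/
theorem pathOfPartition_isSPath (n : ℕ) (p : Finpartition (Finset.Icc 1 n)) :
    pathOfPartition n p 0 = 0 ∧ pathOfPartition n p n = n ∧
      (∀ j ≤ n, pathOfPartition n p j ≤ j) ∧
      (∀ j k, j ≤ k → pathOfPartition n p j ≤ pathOfPartition n p k) := by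
  refine ⟨?_, ?_, ?_, ?_⟩
  · unfold pathOfPartition
    rw [Finset.sum_eq_zero]
    intro C hC
    simp only [Finset.mem_filter] at hC
    obtain ⟨hCp, hC0⟩ := hC
    have hne := p.ne_bot hCp
    rw [Finset.card_eq_zero]
    by_contra h
    obtain ⟨x, hx⟩ := Finset.nonempty_iff_ne_empty.mpr h
    have hxle := hC0 x hx
    have : x ∈ Finset.Icc 1 n := (p.le hCp) hx
    simp at this
    omega
  · unfold pathOfPartition
    have : p.parts.filter (fun C => ∀ x ∈ C, x ≤ n) = p.parts := by
      apply Finset.filter_true_of_mem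
      intro C hC x hx
      have : x ∈ Finset.Icc 1 n := (p.le hC) hx
      simp at this; omega
    rw [this, p.sum_card_parts]
    simp [Nat.card_Icc]
  · intro j hj
    unfold pathOfPartition
    have hdisj : ((p.parts.filter (fun C => ∀ x ∈ C, x ≤ j) : Finset (Finset ℕ)) : Set (Finset ℕ)).PairwiseDisjoint id := by
      intro a ha b hb hab
      exact p.disjoint (Finset.mem_filter.mp ha).1 (Finset.mem_filter.mp hb).1 hab
    have heq : ∑ C ∈ p.parts.filter (fun C => ∀ x ∈ C, x ≤ j), C.card
        = ((p.parts.filter (fun C => ∀ x ∈ C, x ≤ j)).biUnion id).card :=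
      (Finset.card_biUnion (fun a ha b hb hab => hdisj ha hb hab)).symm
    rw [heq]
    have hsub : (p.parts.filter (fun C => ∀ x ∈ C, x ≤ j)).biUnion id ⊆ Finset.Icc 1 j := by
      intro x hx
      simp only [Finset.mem_biUnion, Finset.mem_filter, id] at hx
      obtain ⟨C, ⟨hCp, hCle⟩, hxC⟩ := hx
      have : x ∈ Finset.Icc 1 n := (p.le hCp) hxC
      simp at this ⊢
      exact ⟨this.1, hCle x hxC⟩
    calc ((p.parts.filter (fun C => ∀ x ∈ C, x ≤ j)).biUnion id).card
        ≤ (Finset.Icc 1 j).card := Finset.card_le_card hsub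
      _ = j := by simp [Nat.card_Icc]
  · intro j k hjk
    apply Finset.sum_le_sum_of_subset
    intro C hC
    simp only [Finset.mem_filter] at hC ⊢
    exact ⟨hC.1, fun x hx => le_trans (hC.2 x hx) hjk⟩
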